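/- For two quantum channels with Choi matrices Φ_μ, Ψ_μ, the conditional CB semidistance D_cb^ρ(Φ,Ψ) = Tr|(ρ̃^{1/2} ⊗ I)(Φ_μ - Ψ_μ)(ρ̃^{1/2} ⊗ I)| and the conditional Hellinger distance d_c^ρ with (d_c^ρ)²/2 = 1 - Tr|Φ_μ^{1/2}(ρ̃ ⊗ I)Ψ_μ^{1/2}| satisfy the equivalence inequalities (d_c^ρ)² ≤ D_cb^ρ ≤ 2 d_c^ρ for every density matrix ρ. -/

import Mathlib

open Matrix Kronecker
open scoped ComplexOrder

open scoped Classical in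
/-- Positive semidefinite square root (zero if the matrix is not PSD). -/
noncomputable def psqrt {n : Type*} [Fintype n] [DecidableEq n] (A : Matrix n n ℂ) : Matrix n n ℂ :=
  if h : A.PosSemidef then (h.1.eigenvectorUnitary : Matrix n n ℂ) *
    diagonal ((↑) ∘ Real.sqrt ∘ h.1.eigenvalues) * (star h.1.eigenvectorUnitary : Matrix n n ℂ) else 0

/-- Matrix absolute value `|A| = √(Aᴴ A)`. -/
noncomputable def matAbs {n : Type*} [Fintype n] [DecidableEq n] (A : Matrix n n ℂ) : Matrix n n ℂ :=
  psqrt (Aᴴ * A)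

namespace FvdG
variable {k : Type*} [Fintype k] [DecidableEq k]

open scoped MatrixOrder in
lemma psqrt_eq {A : Matrix k k ℂ} (hA : A.PosSemidef) : psqrt A = CFC.sqrt A := by
  rw [CFC.sqrt_eq_real_sqrt A (Matrix.nonneg_iff_posSemidef.mpr hA), cfcₙ_eq_cfc, hA.1.cfc_eq, IsHermitian.cfc,
    Unitary.conjStarAlgAut_apply]
  unfold psqrt
  rw [dif_pos hA]
  rfl

open scoped MatrixOrder in
lemma psqrt_posSemidef {A : Matrix k k ℂ} (hA : A.PosSemidef) : (psqrt A).PosSemidef := by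
  rw [psqrt_eq hA]; exact Matrix.nonneg_iff_posSemidef.mp (CFC.sqrt_nonneg A)

open scoped MatrixOrder in
lemma psqrt_mul_self {A : Matrix k k ℂ} (hA : A.PosSemidef) : psqrt A * psqrt A = A := by
  rw [psqrt_eq hA]; exact CFC.sqrt_mul_sqrt_self A (Matrix.nonneg_iff_posSemidef.mpr hA)

open scoped MatrixOrder in
lemma psqrt_unique {A B : Matrix k k ℂ} (hB : B.PosSemidef) (h : B * B = A) : psqrt A = B := by
  have hA : A.PosSemidef := by
    rw [← h]; nth_rewrite 1 [← hB.1.eq]; exact posSemidef_conjTranspose_mul_self B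
  rw [psqrt_eq hA]
  exact CFC.sqrt_unique h (Matrix.nonneg_iff_posSemidef.mpr hB)

lemma matAbs_posSemidef (M : Matrix k k ℂ) : (matAbs M).PosSemidef :=
  psqrt_posSemidef (posSemidef_conjTranspose_mul_self M)

lemma matAbs_mul_self (M : Matrix k k ℂ) : matAbs M * matAbs M = Mᴴ * M :=
  psqrt_mul_self (posSemidef_conjTranspose_mul_self M)

lemma matAbs_unique {M B : Matrix k k ℂ} (hB : B.PosSemidef) (h : B * B = Mᴴ * M) :
    matAbs M = B := psqrt_unique hB h

lemma diag_nonneg {A : Matrix k k ℂ} (hA : A.PosSemidef) (i : k) : 0 ≤ A i i := by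
  exact hA.diag_nonneg

lemma trace_nonneg {A : Matrix k k ℂ} (hA : A.PosSemidef) : 0 ≤ A.trace := by
  rw [Matrix.trace]
  exact Finset.sum_nonneg fun i _ => diag_nonneg hA i

lemma trace_mul_nonneg {A B : Matrix k k ℂ} (hA : A.PosSemidef) (hB : B.PosSemidef) :
    0 ≤ (A * B).trace := by
  have h1 : A * B = psqrt A * (psqrt A * B) := by rw [← mul_assoc, psqrt_mul_self hA]
  rw [h1, trace_mul_comm]
  have hh : (psqrt A * B * psqrt A).PosSemidef := by
    have := hB.conjTranspose_mul_mul_same (psqrt A)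
    rwa [(psqrt_posSemidef hA).1.eq] at this
  exact trace_nonneg hh

variable {Δ : Matrix k k ℂ}

noncomputable def funMat (hΔ : Δ.IsHermitian) (f : ℝ → ℂ) : Matrix k k ℂ :=
  (hΔ.eigenvectorUnitary : Matrix k k ℂ) * diagonal (fun i => f (hΔ.eigenvalues i)) *
    (star (hΔ.eigenvectorUnitary : Matrix k k ℂ))

lemma star_mul_self (hΔ : Δ.IsHermitian) :
    star (hΔ.eigenvectorUnitary : Matrix k k ℂ) * (hΔ.eigenvectorUnitary : Matrix k k ℂ) = 1 := by
  exact_mod_cast Unitary.coe_star_mul_self hΔ.eigenvectorUnitary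

lemma mul_star_self (hΔ : Δ.IsHermitian) :
    (hΔ.eigenvectorUnitary : Matrix k k ℂ) * star (hΔ.eigenvectorUnitary : Matrix k k ℂ) = 1 := by
  exact_mod_cast Unitary.coe_mul_star_self hΔ.eigenvectorUnitary

lemma funMat_mul (hΔ : Δ.IsHermitian) (f g : ℝ → ℂ) :
    funMat hΔ f * funMat hΔ g = funMat hΔ (fun x => f x * g x) := by
  unfold funMat
  rw [show ∀ A B C D E F : Matrix k k ℂ, A*B*C*(D*E*F) = A*B*(C*D)*E*F by intros; noncomm_ring,
    star_mul_self hΔ, mul_one, mul_assoc _ _ (diagonal _), diagonal_mul_diagonal]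

lemma funMat_id (hΔ : Δ.IsHermitian) : funMat hΔ (fun x => (x : ℂ)) = Δ := by
  conv_rhs => rw [hΔ.spectral_theorem]
  rfl

lemma funMat_trace (hΔ : Δ.IsHermitian) (f : ℝ → ℂ) :
    (funMat hΔ f).trace = ∑ i, f (hΔ.eigenvalues i) := by
  unfold funMat
  rw [Matrix.trace_mul_cycle, star_mul_self hΔ, one_mul, trace_diagonal]

lemma funMat_conjTranspose (hΔ : Δ.IsHermitian) (f : ℝ → ℂ) :
    (funMat hΔ f)ᴴ = funMat hΔ (fun x => starRingEnd ℂ (f x)) := by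
  unfold funMat
  rw [conjTranspose_mul, conjTranspose_mul, diagonal_conjTranspose]
  simp only [← Matrix.star_eq_conjTranspose, star_star, mul_assoc]
  rfl

lemma funMat_isHermitian (hΔ : Δ.IsHermitian) {f : ℝ → ℂ}
    (hf : ∀ x, starRingEnd ℂ (f x) = f x) : (funMat hΔ f).IsHermitian := by
  rw [Matrix.IsHermitian, funMat_conjTranspose]
  simp only [hf]

lemma funMat_posSemidef (hΔ : Δ.IsHermitian) {f : ℝ → ℂ}
    (hf : ∀ x, 0 ≤ f x) : (funMat hΔ f).PosSemidef := by
  have hd : (diagonal (fun i => f (hΔ.eigenvalues i))).PosSemidef :=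
    Matrix.PosSemidef.diagonal (fun i => hf _)
  have := hd.mul_mul_conjTranspose_same (hΔ.eigenvectorUnitary : Matrix k k ℂ)
  unfold funMat
  rwa [Matrix.star_eq_conjTranspose]

lemma funMat_one (hΔ : Δ.IsHermitian) : funMat hΔ (fun _ => 1) = 1 := by
  unfold funMat
  rw [diagonal_one, mul_one, mul_star_self hΔ]

lemma funMat_add (hΔ : Δ.IsHermitian) (f g : ℝ → ℂ) :
    funMat hΔ f + funMat hΔ g = funMat hΔ (fun x => f x + g x) := by
  unfold funMat
  rw [← add_mul, ← mul_add, ← diagonal_add]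

lemma funMat_zero (hΔ : Δ.IsHermitian) : funMat hΔ (fun _ => 0) = 0 := by
  unfold funMat
  simp [diagonal_zero]

lemma funMat_congr (hΔ : Δ.IsHermitian) {f g : ℝ → ℂ} (h : ∀ x, f x = g x) :
    funMat hΔ f = funMat hΔ g := by
  obtain rfl : f = g := funext h
  rfl

lemma matAbs_funMat (hΔ : Δ.IsHermitian) : matAbs Δ = funMat hΔ (fun x => ((|x| : ℝ) : ℂ)) := by
  apply matAbs_unique (funMat_posSemidef hΔ (fun x => Complex.zero_le_real.mpr (abs_nonneg x)))
  have h2 : funMat hΔ (fun x => ((|x|:ℝ):ℂ) * ((|x|:ℝ):ℂ)) = funMat hΔ (fun x => (x:ℂ) * (x:ℂ)) :=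
    funMat_congr hΔ (fun x => by
      rw [← Complex.ofReal_mul, ← Complex.ofReal_mul, abs_mul_abs_self])
  rw [funMat_mul, h2, ← funMat_mul, funMat_id, hΔ.eq]


variable {k : Type*} [Fintype k] [DecidableEq k]

def IsCon (C : Matrix k k ℂ) : Prop := (1 - Cᴴ * C).PosSemidef

lemma diag_abs_le_one {C : Matrix k k ℂ} (hC : IsCon C) (i : k) : ‖C i i‖ ≤ 1 := by
  have h1 : 0 ≤ ((1 - Cᴴ * C) i i).re := (Complex.le_def.mp (diag_nonneg hC i)).1
  have h2 : ((Cᴴ * C) i i).re = ∑ j, Complex.normSq (C j i) := by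
    simp only [Matrix.mul_apply, Matrix.conjTranspose_apply]
    rw [Complex.re_sum]
    congr 1; ext j
    rw [Complex.star_def, ← Complex.normSq_eq_conj_mul_self, Complex.ofReal_re]
  have h3 : Complex.normSq (C i i) ≤ 1 := by
    have hle : Complex.normSq (C i i) ≤ ∑ j, Complex.normSq (C j i) :=
      Finset.single_le_sum (f := fun j => Complex.normSq (C j i))
        (fun j _ => Complex.normSq_nonneg _) (Finset.mem_univ i)
    have he : ((1 - Cᴴ * C) i i).re = 1 - ((Cᴴ * C) i i).re := by
      simp [Matrix.sub_apply, Matrix.one_apply]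
    rw [he, h2] at h1
    linarith
  calc ‖C i i‖ = Real.sqrt (Complex.normSq (C i i)) := by rw [Complex.norm_def]
    _ ≤ Real.sqrt 1 := Real.sqrt_le_sqrt h3
    _ = 1 := Real.sqrt_one

lemma conj_contraction {C : Matrix k k ℂ} (hC : IsCon C) {U : Matrix k k ℂ}
    (hU1 : Uᴴ * U = 1) (hU2 : U * Uᴴ = 1) : IsCon (Uᴴ * C * U) := by
  have key : Uᴴ * (1 - Cᴴ * C) * U = 1 - (Uᴴ * C * U)ᴴ * (Uᴴ * C * U) := by
    calc Uᴴ * (1 - Cᴴ * C) * U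
        = Uᴴ * U - Uᴴ * Cᴴ * 1 * (C * U) := by noncomm_ring
      _ = Uᴴ * U - Uᴴ * Cᴴ * (U * Uᴴ) * (C * U) := by rw [hU2]
      _ = 1 - (Uᴴ * C * U)ᴴ * (Uᴴ * C * U) := by
          rw [hU1]
          simp only [Matrix.conjTranspose_mul, Matrix.conjTranspose_conjTranspose]
          noncomm_ring
  unfold IsCon
  rw [← key]
  exact hC.conjTranspose_mul_mul_same U

lemma re_trace_mul_le {Δ C : Matrix k k ℂ} (hΔ : Δ.IsHermitian) (hC : IsCon C) :
    ((Δ * C).trace).re ≤ ((matAbs Δ).trace).re := by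
  classical
  set U : Matrix k k ℂ := (hΔ.eigenvectorUnitary : Matrix k k ℂ) with hUdef
  have hU1 : Uᴴ * U = 1 := by
    rw [← Matrix.star_eq_conjTranspose]; exact star_mul_self hΔ
  have hU2 : U * Uᴴ = 1 := by
    rw [← Matrix.star_eq_conjTranspose]; exact mul_star_self hΔ
  set E : Matrix k k ℂ := Uᴴ * C * U with hEdef
  have hEcon : IsCon E := conj_contraction hC hU1 hU2
  set D : Matrix k k ℂ := diagonal (fun i => ((hΔ.eigenvalues i : ℝ) : ℂ)) with hDdef
  have hDelta : Δ = U * D * Uᴴ := by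
    rw [hDdef, ← Matrix.star_eq_conjTranspose]
    exact (funMat_id hΔ).symm
  have htr : (Δ * C).trace = ∑ i, ((hΔ.eigenvalues i : ℝ) : ℂ) * E i i := by
    have h4 : Δ * C = U * (D * (Uᴴ * C)) := by rw [hDelta]; noncomm_ring
    rw [h4, Matrix.trace_mul_comm]
    have h5 : D * (Uᴴ * C) * U = D * E := by rw [hEdef]; noncomm_ring
    rw [h5, Matrix.trace]
    congr 1; ext i
    rw [Matrix.diag_apply, Matrix.mul_apply,
      Finset.sum_eq_single i (fun j _ hj => by rw [hDdef, Matrix.diagonal_apply_ne' _ hj, zero_mul]) (by simp)]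
    rw [hDdef, Matrix.diagonal_apply_eq]
  have habs : ((matAbs Δ).trace).re = ∑ i, |hΔ.eigenvalues i| := by
    rw [matAbs_funMat hΔ, funMat_trace, Complex.re_sum]
    simp
  rw [htr, habs, Complex.re_sum]
  apply Finset.sum_le_sum
  intro i _
  have h1 : (((hΔ.eigenvalues i : ℝ) : ℂ) * E i i).re = hΔ.eigenvalues i * (E i i).re := by
    simp [Complex.mul_re]
  rw [h1]
  calc hΔ.eigenvalues i * (E i i).re ≤ |hΔ.eigenvalues i * (E i i).re| := le_abs_self _
    _ = |hΔ.eigenvalues i| * |(E i i).re| := abs_mul _ _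
    _ ≤ |hΔ.eigenvalues i| * 1 := by
        apply mul_le_mul_of_nonneg_left _ (abs_nonneg _)
        calc |(E i i).re| ≤ ‖E i i‖ := Complex.abs_re_le_norm _
          _ ≤ 1 := diag_abs_le_one hEcon i
    _ = |hΔ.eigenvalues i| := mul_one _


lemma herm_idem_posSemidef {A : Matrix k k ℂ} (hH : A.IsHermitian) (hI : A * A = A) :
    A.PosSemidef := by
  have h : A = Aᴴ * A := by rw [hH.eq, hI]
  rw [h]
  exact posSemidef_conjTranspose_mul_self A

lemma exists_polar (M : Matrix k k ℂ) : ∃ W : Matrix k k ℂ,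
    M = W * matAbs M ∧ Wᴴ * W * matAbs M = matAbs M ∧ IsCon W ∧ IsCon Wᴴ := by
  classical
  set R := matAbs M with hRdef
  have hR : R.PosSemidef := matAbs_posSemidef M
  have hRH : R.IsHermitian := hR.1
  have hRsq : R * R = Mᴴ * M := matAbs_mul_self M
  set g : ℝ → ℂ := fun x => if x = 0 then 0 else (x : ℂ)⁻¹ with hgdef
  set ind : ℝ → ℂ := fun x => if x = 0 then 0 else 1 with hinddef
  set Rp := funMat hRH g with hRpdef
  set P := funMat hRH ind with hPdef
  set W := M * Rp with hWdef
  have hRfun : funMat hRH (fun x => (x : ℂ)) = R := funMat_id hRH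
  -- pointwise identities
  have hgx : ∀ x : ℝ, g x * (x : ℂ) = ind x := by
    intro x
    by_cases h : x = 0 <;>
      simp [hgdef, hinddef, h, inv_mul_cancel₀, Complex.ofReal_ne_zero]
  have hxg : ∀ x : ℝ, (x : ℂ) * g x = ind x := by
    intro x
    by_cases h : x = 0 <;>
      simp [hgdef, hinddef, h, mul_inv_cancel₀, Complex.ofReal_ne_zero]
  have hxind : ∀ x : ℝ, (x : ℂ) * ind x = (x : ℂ) := by
    intro x; by_cases h : x = 0 <;> simp [hinddef, h]
  have hindx : ∀ x : ℝ, ind x * (x : ℂ) = (x : ℂ) := by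
    intro x; by_cases h : x = 0 <;> simp [hinddef, h]
  have hgind : ∀ x : ℝ, g x * ind x = g x := by
    intro x; by_cases h : x = 0 <;> simp [hgdef, hinddef, h]
  have hindind : ∀ x : ℝ, ind x * ind x = ind x := by
    intro x; by_cases h : x = 0 <;> simp [hinddef, h]
  have hstarind : ∀ x : ℝ, starRingEnd ℂ (ind x) = ind x := by
    intro x; by_cases h : x = 0 <;> simp [hinddef, h]
  have hstarg : ∀ x : ℝ, starRingEnd ℂ (g x) = g x := by
    intro x
    by_cases h : x = 0 <;> simp [hgdef, h, ← Complex.ofReal_inv]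
  -- matrix identities
  have hRpR : Rp * R = P := by
    have h := funMat_mul hRH g (fun x => (x : ℂ))
    rw [hRfun, funMat_congr hRH hgx] at h
    exact h
  have hRRp : R * Rp = P := by
    have h := funMat_mul hRH (fun x => (x : ℂ)) g
    rw [hRfun, funMat_congr hRH hxg] at h
    exact h
  have hRP : R * P = R := by
    have h := funMat_mul hRH (fun x => (x : ℂ)) ind
    rw [hRfun, funMat_congr hRH hxind, hRfun] at h
    exact h
  have hPR : P * R = R := by
    have h := funMat_mul hRH ind (fun x => (x : ℂ))
    rw [hRfun, funMat_congr hRH hindx, hRfun] at h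
    exact h
  have hRpP : Rp * P = Rp := by
    have h := funMat_mul hRH g ind
    rw [funMat_congr hRH hgind] at h
    exact h
  have hPP : P * P = P := by
    have h := funMat_mul hRH ind ind
    rw [funMat_congr hRH hindind] at h
    exact h
  have hPH : P.IsHermitian := by
    rw [hPdef]; exact funMat_isHermitian hRH hstarind
  have hRpHerm : Rp.IsHermitian := by
    rw [hRpdef]; exact funMat_isHermitian hRH hstarg
  have hRRP : R * R * P = R * R := by rw [mul_assoc, hRP]
  have hPRR : P * (R * R) = R * R := by rw [← mul_assoc, hPR]
  have hMP : M * P = M := by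
    have hz : (M * P - M)ᴴ * (M * P - M) = 0 := by
      rw [Matrix.conjTranspose_sub, Matrix.conjTranspose_mul, hPH.eq]
      rw [Matrix.sub_mul, Matrix.mul_sub, Matrix.mul_sub]
      rw [show P * Mᴴ * (M * P) = P * (Mᴴ * M) * P by noncomm_ring,
        show P * Mᴴ * M = P * (Mᴴ * M) by noncomm_ring,
        show Mᴴ * (M * P) = Mᴴ * M * P by noncomm_ring]
      rw [← hRsq, hPRR, hRRP]
      abel
    have := Matrix.conjTranspose_mul_self_eq_zero.mp hz
    rwa [sub_eq_zero] at this
  have hWR : W * R = M := by rw [hWdef, mul_assoc, hRpR, hMP]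
  have hWH : Wᴴ = Rp * Mᴴ := by rw [hWdef, Matrix.conjTranspose_mul, hRpHerm.eq]
  have hWW : Wᴴ * W = P := by
    rw [hWH, hWdef, show Rp * Mᴴ * (M * Rp) = Rp * (Mᴴ * M) * Rp by noncomm_ring, ← hRsq]
    rw [show Rp * (R * R) * Rp = ((Rp * R) * (R * Rp)) by noncomm_ring, hRpR, hRRp, hPP]
  have hOneSubP : (1 - P).PosSemidef := by
    have h1 : funMat hRH (fun x => 1 - ind x) + P = 1 := by
      rw [hPdef, funMat_add]
      rw [show (fun x => 1 - ind x + ind x) = fun _ : ℝ => (1 : ℂ) by ext x; ring]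
      exact funMat_one hRH
    have h2 : (1 : Matrix k k ℂ) - P = funMat hRH (fun x => 1 - ind x) := by
      rw [← h1]; abel
    rw [h2]
    apply funMat_posSemidef
    intro x
    by_cases h : x = 0 <;> simp [hinddef, h]
  refine ⟨W, hWR.symm, by rw [hWW, hPR], ?_, ?_⟩
  · unfold IsCon
    rw [hWW]
    exact hOneSubP
  · unfold IsCon
    rw [Matrix.conjTranspose_conjTranspose]
    have hQH : (W * Wᴴ).IsHermitian := by
      rw [Matrix.IsHermitian, Matrix.conjTranspose_mul, Matrix.conjTranspose_conjTranspose]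
    have hWP : W * P = W := by rw [hWdef, mul_assoc, hRpP]
    have hQQ : (W * Wᴴ) * (W * Wᴴ) = W * Wᴴ := by
      rw [show W * Wᴴ * (W * Wᴴ) = W * (Wᴴ * W) * Wᴴ by noncomm_ring, hWW, hWP]
    apply herm_idem_posSemidef
    · rw [Matrix.IsHermitian, Matrix.conjTranspose_sub, Matrix.conjTranspose_one, hQH.eq]
    · rw [Matrix.mul_sub, Matrix.sub_mul, Matrix.sub_mul, hQQ, mul_one, one_mul, mul_one]
      abel


lemma matAbs_of_posSemidef {A : Matrix k k ℂ} (hA : A.PosSemidef) : matAbs A = A :=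
  matAbs_unique hA (by rw [hA.1.eq])

lemma re_trace_le_abs (M : Matrix k k ℂ) : (M.trace).re ≤ ((matAbs M).trace).re := by
  obtain ⟨W, hM, hWWR, hW, hW'⟩ := exists_polar M
  have h1 : M.trace = ((matAbs M) * W).trace := by rw [← Matrix.trace_mul_comm, ← hM]
  rw [h1]
  have h2 := re_trace_mul_le (matAbs_posSemidef M).1 hW
  rwa [matAbs_of_posSemidef (matAbs_posSemidef M)] at h2

lemma trace_abs_conj {W V N : Matrix k k ℂ} (hW : Wᴴ * W * N = N) (hV : N * (Vᴴ * V) = N) :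
    (matAbs (W * N * Vᴴ)).trace = (matAbs N).trace := by
  set R := matAbs N with hRdef
  have hR : R.PosSemidef := matAbs_posSemidef N
  have hRN : R * R = Nᴴ * N := matAbs_mul_self N
  set T := Vᴴ * V with hTdef
  have hTH : Tᴴ = T := by
    rw [hTdef, Matrix.conjTranspose_mul, Matrix.conjTranspose_conjTranspose]
  have hNNT : Nᴴ * N * T = Nᴴ * N := by rw [mul_assoc, hV]
  have hRRT : R * R * T = R * R := by rw [hRN]; exact hNNT
  have hRT : R * T = R := by
    have hz : (R * T - R)ᴴ * (R * T - R) = 0 := by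
      rw [Matrix.conjTranspose_sub, Matrix.conjTranspose_mul, hTH, hR.1.eq]
      calc (T * R - R) * (R * T - R)
          = T * (R * R * T) - T * (R * R) - R * R * T + R * R := by noncomm_ring
        _ = 0 := by rw [hRRT]; abel
    have := Matrix.conjTranspose_mul_self_eq_zero.mp hz
    rwa [sub_eq_zero] at this
  have hTR : T * R = R := by
    have h := congrArg Matrix.conjTranspose hRT
    rwa [Matrix.conjTranspose_mul, hTH, hR.1.eq] at h
  have habs : matAbs (W * N * Vᴴ) = V * R * Vᴴ := by
    apply matAbs_unique (hR.mul_mul_conjTranspose_same V)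
    calc (V * R * Vᴴ) * (V * R * Vᴴ)
        = V * ((R * T) * R) * Vᴴ := by rw [hTdef]; noncomm_ring
      _ = V * (Nᴴ * N) * Vᴴ := by rw [hRT, hRN]
      _ = V * Nᴴ * (Wᴴ * W * N) * Vᴴ := by rw [hW]; noncomm_ring
      _ = (W * N * Vᴴ)ᴴ * (W * N * Vᴴ) := by
          simp only [Matrix.conjTranspose_mul, Matrix.conjTranspose_conjTranspose]
          noncomm_ring
  rw [habs, Matrix.trace_mul_cycle, show Vᴴ * V * R = T * R from rfl, hTR]

lemma trace_conjTranspose_mul_self_re (A : Matrix k k ℂ) :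
    ((Aᴴ * A).trace).re = ∑ p : k × k, Complex.normSq (A p.1 p.2) := by
  simp only [Matrix.trace, Matrix.diag_apply, Matrix.mul_apply, Matrix.conjTranspose_apply,
    Complex.re_sum, Complex.star_def, ← Complex.normSq_eq_conj_mul_self, Complex.ofReal_re]
  rw [Fintype.sum_prod_type, Finset.sum_comm]

lemma trace_cs (A B : Matrix k k ℂ) : ‖(Aᴴ * B).trace‖ ≤
    Real.sqrt (((Aᴴ * A).trace).re) * Real.sqrt (((Bᴴ * B).trace).re) := by
  have h1 : ‖(Aᴴ * B).trace‖ ≤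
      ∑ p : k × k, ‖A p.1 p.2‖ * ‖B p.1 p.2‖ := by
    have hT : (Aᴴ * B).trace = ∑ i, ∑ j, starRingEnd ℂ (A j i) * B j i := by
      simp only [Matrix.trace, Matrix.diag_apply, Matrix.mul_apply,
        Matrix.conjTranspose_apply, Complex.star_def]
    rw [hT, Fintype.sum_prod_type, Finset.sum_comm]
    refine (norm_sum_le _ _).trans (Finset.sum_le_sum fun j _ => ?_)
    refine (norm_sum_le _ _).trans (Finset.sum_le_sum fun i _ => ?_)
    rw [norm_mul, Complex.norm_conj]
  have hcs := Finset.sum_mul_sq_le_sq_mul_sq Finset.univ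
    (fun p : k × k => ‖A p.1 p.2‖) (fun p => ‖B p.1 p.2‖)
  have hnn : 0 ≤ ∑ p : k × k, ‖A p.1 p.2‖ * ‖B p.1 p.2‖ :=
    Finset.sum_nonneg fun p _ => mul_nonneg (norm_nonneg _) (norm_nonneg _)
  have h2 : ∑ p : k × k, ‖A p.1 p.2‖ * ‖B p.1 p.2‖ ≤
      Real.sqrt ((∑ p : k × k, ‖A p.1 p.2‖ ^ 2) *
        (∑ p : k × k, ‖B p.1 p.2‖ ^ 2)) := by
    rw [show (∑ p : k × k, ‖A p.1 p.2‖ * ‖B p.1 p.2‖) =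
        Real.sqrt ((∑ p : k × k, ‖A p.1 p.2‖ * ‖B p.1 p.2‖) ^ 2) from
      (Real.sqrt_sq hnn).symm]
    exact Real.sqrt_le_sqrt hcs
  have hA2 : (∑ p : k × k, ‖A p.1 p.2‖ ^ 2) = ((Aᴴ * A).trace).re := by
    rw [trace_conjTranspose_mul_self_re]
    exact Finset.sum_congr rfl fun p _ => Complex.sq_norm _
  have hB2 : (∑ p : k × k, ‖B p.1 p.2‖ ^ 2) = ((Bᴴ * B).trace).re := by
    rw [trace_conjTranspose_mul_self_re]
    exact Finset.sum_congr rfl fun p _ => Complex.sq_norm _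
  calc ‖(Aᴴ * B).trace‖ ≤ _ := h1
    _ ≤ _ := h2
    _ = Real.sqrt (((Aᴴ * A).trace).re) * Real.sqrt (((Bᴴ * B).trace).re) := by
        have hAnn : 0 ≤ ((Aᴴ * A).trace).re := by
          rw [trace_conjTranspose_mul_self_re]
          exact Finset.sum_nonneg fun p _ => Complex.normSq_nonneg _
        rw [hA2, hB2, Real.sqrt_mul hAnn]


lemma funMat_sub {Δ : Matrix k k ℂ} (hΔ : Δ.IsHermitian) (f g : ℝ → ℂ) :
    funMat hΔ f - funMat hΔ g = funMat hΔ (fun x => f x - g x) := by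
  rw [sub_eq_iff_eq_add, funMat_add]
  exact funMat_congr hΔ (fun x => by ring)

lemma state_lower {σ τ : Matrix k k ℂ} (hσ : σ.PosSemidef) (hτ : τ.PosSemidef)
    (hσ1 : σ.trace = 1) (hτ1 : τ.trace = 1) :
    2 * (1 - ((matAbs (psqrt σ * psqrt τ)).trace).re) ≤ ((matAbs (σ - τ)).trace).re := by
  classical
  set P := psqrt σ with hPdef
  set Q := psqrt τ with hQdef
  have hP : P.PosSemidef := psqrt_posSemidef hσ
  have hQ : Q.PosSemidef := psqrt_posSemidef hτ
  set X := P - Q with hXdef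
  have hXH : X.IsHermitian := hP.1.sub hQ.1
  set sgn : ℝ → ℂ := fun x => if 0 ≤ x then 1 else -1 with hsgndef
  set S := funMat hXH sgn with hSdef
  have hstarsgn : ∀ x : ℝ, starRingEnd ℂ (sgn x) = sgn x := by
    intro x; by_cases h : 0 ≤ x <;> simp [hsgndef, h]
  have hSH : S.IsHermitian := funMat_isHermitian hXH hstarsgn
  have hScon : IsCon S := by
    unfold IsCon
    have hSS : Sᴴ * S = 1 := by
      rw [hSH.eq, hSdef, funMat_mul]
      rw [funMat_congr hXH (g := fun _ => (1:ℂ))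
        (fun x => by by_cases h : 0 ≤ x <;> simp [hsgndef, h])]
      exact funMat_one hXH
    rw [hSS, sub_self]
    exact Matrix.PosSemidef.zero
  -- X * S = S * X = |X|
  have habsX : matAbs X = funMat hXH (fun x => ((|x| : ℝ) : ℂ)) := matAbs_funMat hXH
  have hXS : X * S = matAbs X := by
    have h := funMat_mul hXH (fun x => (x : ℂ)) sgn
    rw [funMat_id hXH] at h
    rw [hSdef, h, habsX]
    exact funMat_congr hXH (fun x => by
      by_cases hx : 0 ≤ x
      · simp [hsgndef, hx, abs_of_nonneg hx]
      · simp only [hsgndef, hx, if_false, abs_of_neg (lt_of_not_ge hx)]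
        push_cast; ring)
  have hSX : S * X = matAbs X := by
    have h := funMat_mul hXH sgn (fun x => (x : ℂ))
    rw [funMat_id hXH] at h
    rw [hSdef, h, habsX]
    exact funMat_congr hXH (fun x => by
      by_cases hx : 0 ≤ x
      · simp [hsgndef, hx, abs_of_nonneg hx]
      · simp only [hsgndef, hx, if_false, abs_of_neg (lt_of_not_ge hx)]
        push_cast; ring)
  -- |X| - X and |X| + X are PSD
  have hsub : (matAbs X - X).PosSemidef := by
    have h1 := funMat_sub hXH (fun x => ((|x| : ℝ) : ℂ)) (fun x => (x : ℂ))
    rw [funMat_id hXH, ← habsX] at h1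
    rw [h1]
    apply funMat_posSemidef
    intro x
    rw [show ((|x| : ℝ) : ℂ) - (x : ℂ) = ((|x| - x : ℝ) : ℂ) by push_cast; ring]
    exact Complex.zero_le_real.mpr (sub_nonneg.mpr (le_abs_self x))
  have hadd : (matAbs X + X).PosSemidef := by
    have h1 := funMat_add hXH (fun x => ((|x| : ℝ) : ℂ)) (fun x => (x : ℂ))
    rw [funMat_id hXH, ← habsX] at h1
    rw [h1]
    apply funMat_posSemidef
    intro x
    rw [show ((|x| : ℝ) : ℂ) + (x : ℂ) = ((|x| + x : ℝ) : ℂ) by push_cast; ring]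
    exact Complex.zero_le_real.mpr (by linarith [neg_abs_le x])
  -- trace identities
  have hPP : P * P = σ := by rw [hPdef]; exact psqrt_mul_self hσ
  have hQQ : Q * Q = τ := by rw [hQdef]; exact psqrt_mul_self hτ
  have hστ : σ - τ = P * P - Q * Q := by rw [hPP, hQQ]
  have hkey : ((σ - τ) * S).trace = (P * matAbs X).trace + (Q * matAbs X).trace := by
    have hiden : (σ - τ) * S + (σ - τ) * S = X * ((P + Q) * S) + (P + Q) * (X * S) := by
      rw [hστ, hXdef]; noncomm_ring
    have htr := congrArg Matrix.trace hiden
    rw [Matrix.trace_add, Matrix.trace_add] at htr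
    have e1 : (X * ((P + Q) * S)).trace = ((P + Q) * matAbs X).trace := by
      rw [Matrix.trace_mul_comm, mul_assoc, hSX]
    have e2 : ((P + Q) * (X * S)).trace = ((P + Q) * matAbs X).trace := by rw [hXS]
    rw [e1, e2] at htr
    have h2 : (2:ℂ) * ((σ - τ) * S).trace = 2 * ((P + Q) * matAbs X).trace := by
      rw [two_mul, two_mul]; exact htr
    have h3 := mul_left_cancel₀ (two_ne_zero (α := ℂ)) h2
    rw [h3, Matrix.add_mul, Matrix.trace_add]
  have hdecomp : (P * matAbs X).trace + (Q * matAbs X).trace =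
      (P * (matAbs X - X)).trace + (Q * (matAbs X + X)).trace + (X * X).trace := by
    have hm : P * matAbs X + Q * matAbs X =
        P * (matAbs X - X) + Q * (matAbs X + X) + X * X := by
      rw [hXdef]; noncomm_ring
    have := congrArg Matrix.trace hm
    rwa [Matrix.trace_add, Matrix.trace_add, Matrix.trace_add] at this
  have hXX : (X * X).trace = 2 - ((P * Q).trace + (P * Q).trace) := by
    have h : X * X = P * P + Q * Q - (P * Q + Q * P) := by rw [hXdef]; noncomm_ring
    rw [h, Matrix.trace_sub, Matrix.trace_add, Matrix.trace_add, hPP, hQQ, hσ1, hτ1,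
      Matrix.trace_mul_comm Q P]
    ring
  -- assemble
  have hmain := re_trace_mul_le (hσ.1.sub hτ.1) hScon
  have h0a : 0 ≤ ((P * (matAbs X - X)).trace).re :=
    (Complex.le_def.mp (trace_mul_nonneg hP hsub)).1
  have h0b : 0 ≤ ((Q * (matAbs X + X)).trace).re :=
    (Complex.le_def.mp (trace_mul_nonneg hQ hadd)).1
  have hPQre : ((P * Q).trace).re ≤ ((matAbs (P * Q)).trace).re := re_trace_le_abs _
  have hre : (((σ - τ) * S).trace).re =
      ((P * (matAbs X - X)).trace).re + ((Q * (matAbs X + X)).trace).re +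
        (2 - 2 * ((P * Q).trace).re) := by
    rw [hkey, hdecomp, hXX]
    simp [Complex.add_re, Complex.sub_re]
    ring
  have hfinal : 2 - 2 * ((matAbs (P * Q)).trace).re ≤ (((σ - τ) * S).trace).re := by
    rw [hre]; linarith
  calc 2 * (1 - ((matAbs (P * Q)).trace).re)
      = 2 - 2 * ((matAbs (P * Q)).trace).re := by ring
    _ ≤ (((σ - τ) * S).trace).re := hfinal
    _ ≤ ((matAbs (σ - τ)).trace).re := hmain


lemma fvdg_arith {p q p' q' f : ℝ} (hp0 : 0 ≤ p) (hq0 : 0 ≤ q) (hp'0 : 0 ≤ p')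
    (hq'0 : 0 ≤ q') (hpsum : p + p' = 1) (hqsum : q + q' = 1) (hf0 : 0 ≤ f)
    (hfle : f ≤ Real.sqrt p * Real.sqrt q + Real.sqrt p' * Real.sqrt q')
    (hD0 : 0 ≤ 2 * (p - q)) :
    2 * (p - q) ≤ 2 * Real.sqrt (2 * (1 - f)) := by
  have ha2 : Real.sqrt p ^ 2 = p := Real.sq_sqrt hp0
  have hb2 : Real.sqrt q ^ 2 = q := Real.sq_sqrt hq0
  have hc2 : Real.sqrt p' ^ 2 = p' := Real.sq_sqrt hp'0
  have hd2 : Real.sqrt q' ^ 2 = q' := Real.sq_sqrt hq'0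
  set a := Real.sqrt p
  set b := Real.sqrt q
  set c := Real.sqrt p'
  set d := Real.sqrt q'
  have ha0 : 0 ≤ a := Real.sqrt_nonneg _
  have hb0 : 0 ≤ b := Real.sqrt_nonneg _
  have hc0 : 0 ≤ c := Real.sqrt_nonneg _
  have hd0 : 0 ≤ d := Real.sqrt_nonneg _
  have habcd : (p - q) ^ 2 + (a * b + c * d) ^ 2 ≤ 1 := by
    have hac : a ^ 2 + c ^ 2 = 1 := by rw [ha2, hc2]; exact hpsum
    have hbd : b ^ 2 + d ^ 2 = 1 := by rw [hb2, hd2]; exact hqsum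
    have hpa : p = a ^ 2 := ha2.symm
    have hqb : q = b ^ 2 := hb2.symm
    rw [hpa, hqb]
    nlinarith [sq_nonneg (a * c - b * d), hac, hbd]
  have hpq2 : (p - q) ^ 2 ≤ 1 - f ^ 2 := by
    have h1 : f ^ 2 ≤ (a * b + c * d) ^ 2 := by
      apply pow_le_pow_left₀ hf0 hfle
    linarith
  have hf1 : f ≤ 1 := by nlinarith [sq_nonneg (p - q), hpq2, hf0]
  have hinner : (p - q) ^ 2 ≤ 2 * (1 - f) := by nlinarith [hpq2, hf0, hf1]
  have hpq0 : 0 ≤ p - q := by linarith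
  have h2f : 0 ≤ 2 * (1 - f) := by linarith
  calc 2 * (p - q) = 2 * Real.sqrt ((p - q) ^ 2) := by rw [Real.sqrt_sq hpq0]
    _ ≤ 2 * Real.sqrt (2 * (1 - f)) := by
        have := Real.sqrt_le_sqrt hinner
        linarith

lemma state_upper {σ τ : Matrix k k ℂ} (hσ : σ.PosSemidef) (hτ : τ.PosSemidef)
    (hσ1 : σ.trace = 1) (hτ1 : τ.trace = 1) :
    ((matAbs (σ - τ)).trace).re ≤
      2 * Real.sqrt (2 * (1 - ((matAbs (psqrt σ * psqrt τ)).trace).re)) := by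
  classical
  set P := psqrt σ with hPdef
  set Q := psqrt τ with hQdef
  have hP : P.PosSemidef := psqrt_posSemidef hσ
  have hQ : Q.PosSemidef := psqrt_posSemidef hτ
  have hPP : P * P = σ := by rw [hPdef]; exact psqrt_mul_self hσ
  have hQQ : Q * Q = τ := by rw [hQdef]; exact psqrt_mul_self hτ
  have hΔH : (σ - τ).IsHermitian := hσ.1.sub hτ.1
  set indp : ℝ → ℂ := fun x => if 0 ≤ x then 1 else 0 with hindpdef
  set indn : ℝ → ℂ := fun x => if 0 ≤ x then 0 else 1 with hindndef
  set Pp := funMat hΔH indp with hPpdef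
  set Pn := funMat hΔH indn with hPndef
  have hPpH : Pp.IsHermitian := funMat_isHermitian hΔH
    (fun x => by by_cases h : 0 ≤ x <;> simp [hindpdef, h])
  have hPnH : Pn.IsHermitian := funMat_isHermitian hΔH
    (fun x => by by_cases h : 0 ≤ x <;> simp [hindndef, h])
  have hPpPSD : Pp.PosSemidef := funMat_posSemidef hΔH
    (fun x => by by_cases h : 0 ≤ x <;> simp [hindpdef, h])
  have hPnPSD : Pn.PosSemidef := funMat_posSemidef hΔH
    (fun x => by by_cases h : 0 ≤ x <;> simp [hindndef, h])
  have hPpIdem : Pp * Pp = Pp := by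
    rw [hPpdef, funMat_mul]
    exact funMat_congr hΔH (fun x => by by_cases h : 0 ≤ x <;> simp [hindpdef, h])
  have hPnIdem : Pn * Pn = Pn := by
    rw [hPndef, funMat_mul]
    exact funMat_congr hΔH (fun x => by by_cases h : 0 ≤ x <;> simp [hindndef, h])
  have hsumP : Pp + Pn = 1 := by
    rw [hPpdef, hPndef, funMat_add,
      funMat_congr hΔH (g := fun _ => (1:ℂ))
        (fun x => by by_cases h : 0 ≤ x <;> simp [hindpdef, hindndef, h])]
    exact funMat_one hΔH
  -- |Δ| = Δ Pp - Δ Pn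
  have hDPp : (σ - τ) * Pp = funMat hΔH (fun x => (x : ℂ) * indp x) := by
    have h := funMat_mul hΔH (fun x => (x : ℂ)) indp
    rw [funMat_id hΔH] at h
    rw [hPpdef, h]
  have hDPn : (σ - τ) * Pn = funMat hΔH (fun x => (x : ℂ) * indn x) := by
    have h := funMat_mul hΔH (fun x => (x : ℂ)) indn
    rw [funMat_id hΔH] at h
    rw [hPndef, h]
  have habsΔ : matAbs (σ - τ) = (σ - τ) * Pp - (σ - τ) * Pn := by
    rw [hDPp, hDPn, funMat_sub, matAbs_funMat hΔH]
    exact funMat_congr hΔH (fun x => by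
      by_cases h : 0 ≤ x
      · simp [hindpdef, hindndef, h, abs_of_nonneg h]
      · simp only [hindpdef, hindndef, h, if_false, mul_zero, mul_one, zero_sub,
          abs_of_neg (lt_of_not_ge h)]
        push_cast; ring)
  -- real quantities
  set p : ℝ := ((σ * Pp).trace).re with hpdef
  set q : ℝ := ((τ * Pp).trace).re with hqdef
  set p' : ℝ := ((σ * Pn).trace).re with hp'def
  set q' : ℝ := ((τ * Pn).trace).re with hq'def
  have hp0 : 0 ≤ p := (Complex.le_def.mp (trace_mul_nonneg hσ hPpPSD)).1
  have hq0 : 0 ≤ q := (Complex.le_def.mp (trace_mul_nonneg hτ hPpPSD)).1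
  have hp'0 : 0 ≤ p' := (Complex.le_def.mp (trace_mul_nonneg hσ hPnPSD)).1
  have hq'0 : 0 ≤ q' := (Complex.le_def.mp (trace_mul_nonneg hτ hPnPSD)).1
  have hpsum : p + p' = 1 := by
    have h : (σ * Pp).trace + (σ * Pn).trace = 1 := by
      rw [← Matrix.trace_add, ← Matrix.mul_add, hsumP, mul_one, hσ1]
    have := congrArg Complex.re h
    rw [Complex.add_re] at this
    simpa using this
  have hqsum : q + q' = 1 := by
    have h : (τ * Pp).trace + (τ * Pn).trace = 1 := by
      rw [← Matrix.trace_add, ← Matrix.mul_add, hsumP, mul_one, hτ1]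
    have := congrArg Complex.re h
    rw [Complex.add_re] at this
    simpa using this
  -- D = (p - q) - (p' - q') and (p-q) + (p'-q') = 0
  have hD : ((matAbs (σ - τ)).trace).re = (p - q) - (p' - q') := by
    have h := congrArg (fun M => (Matrix.trace M).re) habsΔ
    rw [Matrix.trace_sub, Matrix.sub_mul, Matrix.sub_mul, Matrix.trace_sub, Matrix.trace_sub] at h
    rw [h]
    simp [Complex.sub_re, hpdef, hqdef, hp'def, hq'def]
  have hzero : (p - q) + (p' - q') = 0 := by
    have h : ((σ - τ) * Pp).trace + ((σ - τ) * Pn).trace = 0 := by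
      rw [← Matrix.trace_add, ← Matrix.mul_add, hsumP, mul_one, Matrix.trace_sub, hσ1, hτ1]
      ring
    have := congrArg Complex.re h
    rw [Complex.add_re] at this
    rw [Matrix.sub_mul, Matrix.sub_mul, Matrix.trace_sub, Matrix.trace_sub] at this
    simp only [Complex.sub_re, Complex.zero_re] at this
    rw [hpdef, hqdef, hp'def, hq'def]
    linarith [this]
  -- fidelity bound via Cauchy-Schwarz
  set f : ℝ := ((matAbs (P * Q)).trace).re with hfdef
  have hf0 : 0 ≤ f := (Complex.le_def.mp (trace_nonneg (matAbs_posSemidef (P * Q)))).1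
  obtain ⟨W, hMW, hWWR, hWcon, hWcon'⟩ := exists_polar (P * Q)
  have hfeq : (matAbs (P * Q)).trace = (Wᴴ * (P * Q)).trace := by
    conv_rhs => rw [hMW]
    rw [← mul_assoc, hWWR]
  have key : ∀ Pi : Matrix k k ℂ, Pi.IsHermitian → Pi * Pi = Pi → Pi.PosSemidef →
      ‖(Wᴴ * (P * (Pi * Q))).trace‖ ≤
        Real.sqrt (((σ * Pi).trace).re) * Real.sqrt (((τ * Pi).trace).re) := by
    intro Pi hPiH hPiI hPiPSD
    set A := Pi * P * W with hAdef
    set B := Pi * Q with hBdef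
    have hAH : Aᴴ = Wᴴ * (P * Pi) := by
      rw [hAdef]
      simp only [Matrix.conjTranspose_mul, hPiH.eq, hP.1.eq, mul_assoc]
    have hTrEq : (Wᴴ * (P * (Pi * Q))).trace = (Aᴴ * B).trace := by
      rw [hBdef, hAH]
      congr 1
      rw [show Wᴴ * (P * Pi) * (Pi * Q) = Wᴴ * (P * ((Pi * Pi) * Q)) by noncomm_ring, hPiI]
    have hBB : (Bᴴ * B).trace = (τ * Pi).trace := by
      rw [hBdef, Matrix.conjTranspose_mul, hPiH.eq, hQ.1.eq,
        show Q * Pi * (Pi * Q) = Q * (Pi * Pi) * Q by noncomm_ring, hPiI,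
        Matrix.trace_mul_cycle, ← hQQ]
    have hG : (P * Pi * P).PosSemidef := by
      have := hPiPSD.mul_mul_conjTranspose_same P
      rwa [hP.1.eq] at this
    have hAA : ((Aᴴ * A).trace).re ≤ ((σ * Pi).trace).re := by
      have h1 : Aᴴ * A = Wᴴ * (P * Pi * P) * W := by
        rw [hAH, hAdef,
          show Wᴴ * (P * Pi) * (Pi * P * W) = Wᴴ * (P * (Pi * Pi) * P) * W by noncomm_ring, hPiI]
      have h2 : (Aᴴ * A).trace = ((P * Pi * P) * (W * Wᴴ)).trace := by
        rw [h1, Matrix.trace_mul_cycle, Matrix.trace_mul_comm]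
      have h3 : 0 ≤ (((P * Pi * P) * (1 - W * Wᴴ)).trace).re := by
        have hWW' : (1 - W * Wᴴ).PosSemidef := by
          have := hWcon'
          unfold IsCon at this
          rwa [Matrix.conjTranspose_conjTranspose] at this
        exact (Complex.le_def.mp (trace_mul_nonneg hG hWW')).1
      have h4 : ((P * Pi * P) * (1 - W * Wᴴ)).trace =
          (P * Pi * P).trace - ((P * Pi * P) * (W * Wᴴ)).trace := by
        rw [Matrix.mul_sub, mul_one, Matrix.trace_sub]
      have h5 : (P * Pi * P).trace = (σ * Pi).trace := by
        rw [Matrix.trace_mul_cycle, hPP]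
      rw [h2]
      have := congrArg Complex.re h4
      rw [Complex.sub_re, h5] at this
      linarith [h3, this.symm ▸ h3]
    calc ‖(Wᴴ * (P * (Pi * Q))).trace‖ = ‖(Aᴴ * B).trace‖ := by rw [hTrEq]
      _ ≤ Real.sqrt (((Aᴴ * A).trace).re) * Real.sqrt (((Bᴴ * B).trace).re) := trace_cs A B
      _ ≤ Real.sqrt (((σ * Pi).trace).re) * Real.sqrt (((τ * Pi).trace).re) := by
          apply mul_le_mul (Real.sqrt_le_sqrt hAA) (le_of_eq (by rw [hBB])) (Real.sqrt_nonneg _) (Real.sqrt_nonneg _)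
  have hsplit : (Wᴴ * (P * Q)).trace =
      (Wᴴ * (P * (Pp * Q))).trace + (Wᴴ * (P * (Pn * Q))).trace := by
    rw [← Matrix.trace_add]
    congr 1
    rw [show Wᴴ * (P * (Pp * Q)) + Wᴴ * (P * (Pn * Q)) = Wᴴ * (P * ((Pp + Pn) * Q)) by noncomm_ring,
      hsumP, one_mul]
  have hfle : f ≤ Real.sqrt p * Real.sqrt q + Real.sqrt p' * Real.sqrt q' := by
    have h1 : f ≤ ‖(Wᴴ * (P * Q)).trace‖ := by
      rw [hfdef, hfeq]
      exact Complex.re_le_norm _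
    have h2 : ‖(Wᴴ * (P * Q)).trace‖ ≤
        ‖(Wᴴ * (P * (Pp * Q))).trace‖ + ‖(Wᴴ * (P * (Pn * Q))).trace‖ := by
      rw [hsplit]; exact norm_add_le _ _
    have h3 := key Pp hPpH hPpIdem hPpPSD
    have h4 := key Pn hPnH hPnIdem hPnPSD
    calc f ≤ _ := h1
      _ ≤ _ := h2
      _ ≤ Real.sqrt p * Real.sqrt q + Real.sqrt p' * Real.sqrt q' := by
          rw [hpdef, hqdef, hp'def, hq'def]; exact add_le_add h3 h4
  -- final arithmetic
  have hD2 : ((matAbs (σ - τ)).trace).re = 2 * (p - q) := by rw [hD]; linarith [hzero]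
  have hD0 : 0 ≤ ((matAbs (σ - τ)).trace).re :=
    (Complex.le_def.mp (trace_nonneg (matAbs_posSemidef (σ - τ)))).1
  rw [hfdef] at hf0 hfle ⊢
  rw [hD2] at hD0 ⊢
  exact fvdg_arith hp0 hq0 hp'0 hq'0 hpsum hqsum hf0 hfle hD0


end FvdG

open FvdG in
theorem fuchs_van_de_graaf_channels {m n : Type*} [Fintype m] [DecidableEq m]
    [Fintype n] [DecidableEq n]
    (Φμ Ψμ : Matrix (n × m) (n × m) ℂ) (hΦ : Φμ.PosSemidef) (hΨ : Ψμ.PosSemidef)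
    (hΦ1 : ∀ ρ : Matrix n n ℂ, ρ.PosSemidef → ρ.trace = 1 →
      ((psqrt ρᵀ ⊗ₖ (1 : Matrix m m ℂ)) * Φμ * (psqrt ρᵀ ⊗ₖ (1 : Matrix m m ℂ))).trace = 1)
    (hΨ1 : ∀ ρ : Matrix n n ℂ, ρ.PosSemidef → ρ.trace = 1 →
      ((psqrt ρᵀ ⊗ₖ (1 : Matrix m m ℂ)) * Ψμ * (psqrt ρᵀ ⊗ₖ (1 : Matrix m m ℂ))).trace = 1) :
    ∀ ρ : Matrix n n ℂ, ρ.PosSemidef → ρ.trace = 1 →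
      2 * (1 - ((matAbs (psqrt Φμ * (ρᵀ ⊗ₖ (1 : Matrix m m ℂ)) * psqrt Ψμ)).trace).re) ≤
        ((matAbs ((psqrt ρᵀ ⊗ₖ (1 : Matrix m m ℂ)) * (Φμ - Ψμ) *
          (psqrt ρᵀ ⊗ₖ (1 : Matrix m m ℂ)))).trace).re ∧
      ((matAbs ((psqrt ρᵀ ⊗ₖ (1 : Matrix m m ℂ)) * (Φμ - Ψμ) *
          (psqrt ρᵀ ⊗ₖ (1 : Matrix m m ℂ)))).trace).re ≤
        2 * Real.sqrt (2 * (1 - ((matAbs (psqrt Φμ * (ρᵀ ⊗ₖ (1 : Matrix m m ℂ)) *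
          psqrt Ψμ)).trace).re)) := by
  intro ρ hρ hρtr
  have hρT : ρᵀ.PosSemidef := hρ.transpose
  set S : Matrix (n × m) (n × m) ℂ := psqrt ρᵀ ⊗ₖ (1 : Matrix m m ℂ) with hSdef
  have hpPSD : (psqrt ρᵀ).PosSemidef := psqrt_posSemidef hρT
  have hpH : (psqrt ρᵀ).IsHermitian := hpPSD.1
  have hSH : S.IsHermitian := by
    rw [hSdef, Matrix.IsHermitian]
    ext ⟨i1, i2⟩ ⟨j1, j2⟩
    rw [Matrix.conjTranspose_apply, Matrix.kroneckerMap_apply, Matrix.kroneckerMap_apply,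
      star_mul', ← Matrix.conjTranspose_apply, ← Matrix.conjTranspose_apply, hpH.eq,
      Matrix.conjTranspose_one]
  have hSS : S * S = ρᵀ ⊗ₖ (1 : Matrix m m ℂ) := by
    rw [hSdef, ← Matrix.mul_kronecker_mul, psqrt_mul_self hρT, one_mul]
  set σ : Matrix (n × m) (n × m) ℂ := S * Φμ * S with hσdef
  set τ : Matrix (n × m) (n × m) ℂ := S * Ψμ * S with hτdef
  have hσPSD : σ.PosSemidef := by
    have := hΦ.conjTranspose_mul_mul_same S
    rwa [hSH.eq] at this
  have hτPSD : τ.PosSemidef := by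
    have := hΨ.conjTranspose_mul_mul_same S
    rwa [hSH.eq] at this
  have hσtr : σ.trace = 1 := hΦ1 ρ hρ hρtr
  have hτtr : τ.trace = 1 := hΨ1 ρ hρ hρtr
  -- D-term
  have hDterm : S * (Φμ - Ψμ) * S = σ - τ := by
    rw [hσdef, hτdef, Matrix.mul_sub, Matrix.sub_mul]
  -- F-term
  set X : Matrix (n × m) (n × m) ℂ := psqrt Φμ * S with hXdef
  set Z : Matrix (n × m) (n × m) ℂ := psqrt Ψμ * S with hZdef
  have hXX : Xᴴ * X = σ := by
    rw [hXdef, Matrix.conjTranspose_mul, hSH.eq, (psqrt_posSemidef hΦ).1.eq, hσdef,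
      show S * psqrt Φμ * (psqrt Φμ * S) = S * (psqrt Φμ * psqrt Φμ) * S by noncomm_ring,
      psqrt_mul_self hΦ]
  have hZZ : Zᴴ * Z = τ := by
    rw [hZdef, Matrix.conjTranspose_mul, hSH.eq, (psqrt_posSemidef hΨ).1.eq, hτdef,
      show S * psqrt Ψμ * (psqrt Ψμ * S) = S * (psqrt Ψμ * psqrt Ψμ) * S by noncomm_ring,
      psqrt_mul_self hΨ]
  have hRX : matAbs X = psqrt σ := by
    rw [psqrt_unique (matAbs_posSemidef X) (by rw [matAbs_mul_self X, hXX])]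
  have hRZ : matAbs Z = psqrt τ := by
    rw [psqrt_unique (matAbs_posSemidef Z) (by rw [matAbs_mul_self Z, hZZ])]
  obtain ⟨WX, hX1, hX2, _, _⟩ := exists_polar X
  obtain ⟨WZ, hZ1, hZ2, _, _⟩ := exists_polar Z
  rw [hRX] at hX1 hX2
  rw [hRZ] at hZ1 hZ2
  set N : Matrix (n × m) (n × m) ℂ := psqrt σ * psqrt τ with hNdef
  have hWN : WXᴴ * WX * N = N := by
    rw [hNdef, ← mul_assoc, hX2]
  have hNV : N * (WZᴴ * WZ) = N := by
    have h := congrArg Matrix.conjTranspose hZ2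
    rw [Matrix.conjTranspose_mul, Matrix.conjTranspose_mul, Matrix.conjTranspose_conjTranspose,
      (psqrt_posSemidef hτPSD).1.eq] at h
    rw [hNdef, mul_assoc, h]
  have hXY : psqrt Φμ * (ρᵀ ⊗ₖ (1 : Matrix m m ℂ)) * psqrt Ψμ = WX * N * WZᴴ := by
    have h1 : psqrt Φμ * (ρᵀ ⊗ₖ (1 : Matrix m m ℂ)) * psqrt Ψμ = X * Zᴴ := by
      rw [hXdef, hZdef, Matrix.conjTranspose_mul, hSH.eq, (psqrt_posSemidef hΨ).1.eq, ← hSS]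
      noncomm_ring
    rw [h1, hX1, hZ1, Matrix.conjTranspose_mul, (psqrt_posSemidef hτPSD).1.eq, hNdef]
    noncomm_ring
  have hFterm : (matAbs (psqrt Φμ * (ρᵀ ⊗ₖ (1 : Matrix m m ℂ)) * psqrt Ψμ)).trace =
      (matAbs (psqrt σ * psqrt τ)).trace := by
    rw [hXY, trace_abs_conj hWN hNV]
  constructor
  · have := state_lower hσPSD hτPSD hσtr hτtr
    rw [hDterm, hFterm]
    exact this
  · have := state_upper hσPSD hτPSD hσtr hτtr
    rw [hDterm, hFterm]
    exact this
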